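/- For every n ≥ 2 and every M > 0 there exists C > 0 such that for all α > C the following holds. Let t₀ = 0, t_{2n+1} = 1 and let 0 ≤ t₁ ≤ t₂ ≤ ... ≤ t_{2n} ≤ 1 with 0 < tᵢ < 1 for 1 ≤ i ≤ 2n. Let b₀ = (0,0) and, for 1 ≤ i ≤ 2n+1, let bᵢ ∈ ℝ² be points such that |b_{i+1} − bᵢ| ≤ φ(α)·√(t_{i+1} − tᵢ) + α^{−2n−1} for all 0 ≤ i ≤ 2n. Let w₀ ∈ ℝ² and suppose there exists an index 0 ≤ j₀ ≤ 2n+1 with |b_{j₀} − w₀| < M·φ(α)²/√α. Then there exists an index 0 ≤ j ≤ 2n such that t_{j+1} − t_j ≥ α^{1/(10n)} · max( min(|b_j − w₀|, |b_{j+1} − w₀|)², 1/α ). -/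
import Mathlib


noncomputable section

set_option maxHeartbeats 1000000

/-- `φ(α) = exp(√(log α))`. -/
def phi (α : ℝ) : ℝ := Real.exp (Real.sqrt (Real.log α))

/-- Existence of a "special" interval: if consecutive points `b i ∈ ℝ²` move at Brownian speed
over the time intervals `[t i, t (i+1)]` and some `b j₀` is within `M φ(α)²/√α` of `w₀`, then
some time interval is much longer than the squared distance of its endpoints to `w₀`. -/
theorem exists_special_interval (n : ℕ) (hn : 2 ≤ n) (M : ℝ) (hM : 0 < M) :
    ∃ C : ℝ, 0 < C ∧
      ∀ α : ℝ, C < α →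
      ∀ t : ℕ → ℝ, t 0 = 0 → t (2 * n + 1) = 1 →
        (∀ i j : ℕ, i ≤ j → j ≤ 2 * n + 1 → t i ≤ t j) →
        (∀ i : ℕ, 1 ≤ i → i ≤ 2 * n → 0 < t i ∧ t i < 1) →
      ∀ b : ℕ → EuclideanSpace ℝ (Fin 2), b 0 = 0 →
        (∀ i : ℕ, i ≤ 2 * n →
          ‖b (i + 1) - b i‖ ≤ phi α * Real.sqrt (t (i + 1) - t i) + α ^ (-(2 * (n : ℝ)) - 1)) →
      ∀ w₀ : EuclideanSpace ℝ (Fin 2),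
        (∃ j₀ : ℕ, j₀ ≤ 2 * n + 1 ∧ ‖b j₀ - w₀‖ < M * phi α ^ 2 / Real.sqrt α) →
        ∃ j : ℕ, j ≤ 2 * n ∧
          t (j + 1) - t j ≥ α ^ (1 / (10 * (n : ℝ))) *
            max (min ‖b j - w₀‖ ‖b (j + 1) - w₀‖ ^ 2) (1 / α) := by
  have hn2 : (2 : ℝ) ≤ (n : ℝ) := by exact_mod_cast hn
  have hn0 : (0 : ℝ) < (n : ℝ) := by linarith
  set C₀ : ℝ := max (max ((10 * (4 * (n : ℝ) + 6)) ^ 2)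
      (2 * (5 * (2 * (n : ℝ) + 1) + 2 * max (Real.log M) 0) + 1))
      (max ((max 0 (-Real.log M)) ^ 2) 1) with hC₀
  refine ⟨Real.exp C₀, Real.exp_pos _, ?_⟩
  intro α hα t ht0 ht1 htmono htint b hb0 hstep w₀ hw
  obtain ⟨j₀, hj₀le, hj₀⟩ := hw
  by_contra hcon
  push_neg at hcon
  have hα0 : 0 < α := lt_trans (Real.exp_pos _) hα
  set L := Real.log α with hLdef
  have hC₀L : C₀ < L := (Real.lt_log_iff_exp_lt hα0).mpr hα
  have h1L : 1 < L :=
    lt_of_le_of_lt (le_trans (le_max_right _ _) (le_max_right _ _)) hC₀L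
  have hL0 : 0 < L := by linarith
  set sL := Real.sqrt L with hsLdef
  have hsL0 : 0 ≤ sL := Real.sqrt_nonneg _
  have hsLsq : sL ^ 2 = L := Real.sq_sqrt hL0.le
  have hsLbig : 10 * (4 * (n : ℝ) + 6) ≤ sL := by
    have h : (10 * (4 * (n : ℝ) + 6)) ^ 2 ≤ L :=
      le_of_lt (lt_of_le_of_lt (le_trans (le_max_left _ _) (le_max_left _ _)) hC₀L)
    have h2 := Real.sqrt_le_sqrt h
    rwa [Real.sqrt_sq (by positivity)] at h2
  have hlogM : 5 * (2 * (n : ℝ) + 1) + 2 * max (Real.log M) 0 ≤ (L - 1) / 2 := by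
    have h : 2 * (5 * (2 * (n : ℝ) + 1) + 2 * max (Real.log M) 0) + 1 ≤ L :=
      le_of_lt (lt_of_le_of_lt (le_trans (le_max_right _ _) (le_max_left _ _)) hC₀L)
    linarith
  have hnegM : -Real.log M ≤ 2 * sL := by
    have h : (max 0 (-Real.log M)) ^ 2 ≤ L :=
      le_of_lt (lt_of_le_of_lt (le_trans (le_max_left _ _) (le_max_right _ _)) hC₀L)
    have h2 := Real.sqrt_le_sqrt h
    rw [Real.sqrt_sq (le_max_left _ _)] at h2
    have h3 := le_max_right 0 (-Real.log M)
    linarith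
  have hαexp : α = Real.exp L := (Real.exp_log hα0).symm
  have hsqrtα : Real.sqrt α = Real.exp (L / 2) := by
    have hsq : α = Real.exp (L / 2) ^ 2 := by
      rw [hαexp, sq, ← Real.exp_add]
      congr 1
      ring
    rw [hsq, Real.sqrt_sq (Real.exp_nonneg _)]
  have hφ : phi α = Real.exp sL := by unfold phi; rw [← hLdef, ← hsLdef]
  set β : ℝ := α ^ (1 / (10 * (n : ℝ))) with hβdef
  have hβ : β = Real.exp (L / (10 * (n : ℝ))) := by
    rw [hβdef, Real.rpow_def_of_pos hα0, ← hLdef, mul_one_div]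
  have hβ0 : 0 ≤ β := by rw [hβ]; positivity
  set sB : ℝ := Real.exp (L / (20 * (n : ℝ))) with hsBdef
  have hβsB : β = sB ^ 2 := by
    rw [hβ, hsBdef, sq, ← Real.exp_add]
    congr 1
    field_simp
    ring
  have hsB1 : 1 ≤ sB := Real.one_le_exp (by positivity)
  have heSL1 : 1 ≤ Real.exp sL := Real.one_le_exp hsL0
  set ai : ℝ := Real.exp (-(L / 2)) with haidef
  have hai0 : 0 < ai := Real.exp_pos _
  have hinvα : 1 / α = ai ^ 2 := by
    rw [hαexp, haidef, sq, ← Real.exp_add, one_div, ← Real.exp_neg]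
    congr 1
    ring
  have hsmall : α ^ (-(2 * (n : ℝ)) - 1) ≤ ai := by
    rw [Real.rpow_def_of_pos hα0, ← hLdef, haidef]
    apply Real.exp_le_exp.mpr
    nlinarith [mul_pos hL0 hn0]
  set D0 : ℝ := M * Real.exp sL ^ 2 / Real.exp (L / 2) with hD0def
  have hD0eq : M * phi α ^ 2 / Real.sqrt α = D0 := by rw [hD0def, hφ, hsqrtα]
  have hD0exp : D0 = Real.exp (Real.log M + (sL + sL) - L / 2) := by
    rw [Real.exp_sub, Real.exp_add, Real.exp_add, Real.exp_log hM, hD0def, sq]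
  have hD0pos : 0 < D0 := by rw [hD0exp]; exact Real.exp_pos _
  have haiD0 : ai ≤ D0 := by
    rw [hD0exp, haidef]
    apply Real.exp_le_exp.mpr
    linarith
  set G : ℝ := 2 + Real.exp sL * sB with hGdef
  have hG1 : 1 ≤ G := by
    have : 0 < Real.exp sL * sB := by positivity
    rw [hGdef]; linarith
  have hG0 : 0 ≤ G := le_trans zero_le_one hG1
  have hG3 : G ≤ 3 * (Real.exp sL * sB) := by
    have h : (1 : ℝ) * 1 ≤ Real.exp sL * sB :=
      mul_le_mul heSL1 hsB1 zero_le_one (Real.exp_nonneg _)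
    rw [hGdef]
    linarith
  -- key step: bound on each increment
  have key : ∀ j X, j ≤ 2 * n → ai ≤ X → min ‖b j - w₀‖ ‖b (j + 1) - w₀‖ ≤ X →
      ‖b (j + 1) - b j‖ ≤ (1 + Real.exp sL * sB) * X := by
    intro j X hj hXai hminX
    have hX0 : 0 ≤ X := le_trans hai0.le hXai
    have hmax : max (min ‖b j - w₀‖ ‖b (j + 1) - w₀‖ ^ 2) (1 / α) ≤ X ^ 2 := by
      apply max_le
      · exact pow_le_pow_left₀ (le_min (norm_nonneg _) (norm_nonneg _)) hminX 2
      · rw [hinvα]; exact pow_le_pow_left₀ hai0.le hXai 2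
    have hdt : t (j + 1) - t j < β * X ^ 2 := by
      refine lt_of_lt_of_le (hcon j hj) ?_
      exact mul_le_mul_of_nonneg_left hmax hβ0
    have hsq : Real.sqrt (t (j + 1) - t j) ≤ sB * X := by
      have h1 : β * X ^ 2 = (sB * X) ^ 2 := by rw [hβsB]; ring
      have h2 := Real.sqrt_le_sqrt (le_of_lt (h1 ▸ hdt))
      rwa [Real.sqrt_sq (by positivity)] at h2
    calc ‖b (j + 1) - b j‖ ≤ phi α * Real.sqrt (t (j + 1) - t j) + α ^ (-(2 * (n : ℝ)) - 1) :=
          hstep j hj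
      _ ≤ Real.exp sL * (sB * X) + ai := by
          rw [hφ]
          exact add_le_add (mul_le_mul_of_nonneg_left hsq (Real.exp_nonneg _)) hsmall
      _ ≤ Real.exp sL * (sB * X) + X := by linarith
      _ = (1 + Real.exp sL * sB) * X := by ring
  have hXk : ∀ k : ℕ, ai ≤ D0 * G ^ k := by
    intro k
    refine le_trans haiD0 (le_mul_of_one_le_right hD0pos.le (one_le_pow₀ hG1))
  -- forward induction
  have fwd : ∀ k, j₀ + k ≤ 2 * n + 1 → ‖b (j₀ + k) - w₀‖ ≤ D0 * G ^ k := by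
    intro k
    induction k with
    | zero =>
        intro _
        simpa using le_of_lt (hD0eq ▸ hj₀)
    | succ k ih =>
        intro hk
        have ihk := ih (by omega)
        have hjle : j₀ + k ≤ 2 * n := by omega
        have hmin : min ‖b (j₀ + k) - w₀‖ ‖b (j₀ + k + 1) - w₀‖ ≤ D0 * G ^ k :=
          le_trans (min_le_left _ _) ihk
        have hkey := key (j₀ + k) (D0 * G ^ k) hjle (hXk k) hmin
        have htri : ‖b (j₀ + k + 1) - w₀‖
            ≤ ‖b (j₀ + k) - w₀‖ + ‖b (j₀ + k + 1) - b (j₀ + k)‖ := by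
          have h := norm_sub_le_norm_sub_add_norm_sub (b (j₀ + k + 1)) (b (j₀ + k)) w₀
          linarith [h]
        calc ‖b (j₀ + (k + 1)) - w₀‖
            ≤ D0 * G ^ k + (1 + Real.exp sL * sB) * (D0 * G ^ k) :=
              le_trans htri (add_le_add ihk hkey)
          _ = D0 * G ^ (k + 1) := by rw [pow_succ, hGdef]; ring
  -- backward induction
  have bwd : ∀ k, k ≤ j₀ → ‖b (j₀ - k) - w₀‖ ≤ D0 * G ^ k := by
    intro k
    induction k with
    | zero =>
        intro _
        simpa using le_of_lt (hD0eq ▸ hj₀)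
    | succ k ih =>
        intro hk
        have ihk := ih (by omega)
        have hj1 : (j₀ - (k + 1)) + 1 = j₀ - k := by omega
        have hjle : j₀ - (k + 1) ≤ 2 * n := by omega
        have hmin : min ‖b (j₀ - (k + 1)) - w₀‖ ‖b (j₀ - (k + 1) + 1) - w₀‖ ≤ D0 * G ^ k := by
          rw [hj1]; exact le_trans (min_le_right _ _) ihk
        have hkey := key (j₀ - (k + 1)) (D0 * G ^ k) hjle (hXk k) hmin
        have htri : ‖b (j₀ - (k + 1)) - w₀‖
            ≤ ‖b (j₀ - (k + 1) + 1) - w₀‖ + ‖b (j₀ - (k + 1) + 1) - b (j₀ - (k + 1))‖ := by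
          have h := norm_sub_le_norm_sub_add_norm_sub (b (j₀ - (k + 1)))
            (b (j₀ - (k + 1) + 1)) w₀
          have h2 : ‖b (j₀ - (k + 1)) - b (j₀ - (k + 1) + 1)‖
              = ‖b (j₀ - (k + 1) + 1) - b (j₀ - (k + 1))‖ := norm_sub_rev _ _
          linarith [h, h2]
        have ihk' : ‖b (j₀ - (k + 1) + 1) - w₀‖ ≤ D0 * G ^ k := by rw [hj1]; exact ihk
        calc ‖b (j₀ - (k + 1)) - w₀‖
            ≤ D0 * G ^ k + (1 + Real.exp sL * sB) * (D0 * G ^ k) :=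
              le_trans htri (add_le_add ihk' hkey)
          _ = D0 * G ^ (k + 1) := by rw [pow_succ, hGdef]; ring
  set E : ℝ := D0 * G ^ (2 * n + 1) with hEdef
  have hE0 : 0 < E := by rw [hEdef]; positivity
  have hGmono : ∀ k, k ≤ 2 * n + 1 → D0 * G ^ k ≤ E := by
    intro k hk
    rw [hEdef]
    exact mul_le_mul_of_nonneg_left (pow_le_pow_right₀ hG1 hk) hD0pos.le
  have hEbound : ∀ j, j ≤ 2 * n + 1 → ‖b j - w₀‖ ≤ E := by
    intro j hj
    rcases le_or_gt j₀ j with h | h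
    · obtain ⟨k, rfl⟩ := Nat.exists_eq_add_of_le h
      exact le_trans (fwd k hj) (hGmono k (by omega))
    · have hk : j = j₀ - (j₀ - j) := by omega
      rw [hk]
      exact le_trans (bwd (j₀ - j) (by omega)) (hGmono (j₀ - j) (by omega))
  have haiE : ai ≤ E := by rw [hEdef]; exact hXk _
  -- sum of intervals is 1 but each term is small
  have hsum : ∑ j ∈ Finset.range (2 * n + 1), (t (j + 1) - t j) = 1 := by
    rw [Finset.sum_range_sub, ht1, ht0, sub_zero]
  have hterm : ∀ j ∈ Finset.range (2 * n + 1), t (j + 1) - t j < β * E ^ 2 := by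
    intro j hj
    have hj' : j ≤ 2 * n := by
      have := Finset.mem_range.mp hj; omega
    refine lt_of_lt_of_le (hcon j hj') ?_
    refine mul_le_mul_of_nonneg_left ?_ hβ0
    apply max_le
    · exact pow_le_pow_left₀ (le_min (norm_nonneg _) (norm_nonneg _))
        (le_trans (min_le_left _ _) (hEbound j (by omega))) 2
    · rw [hinvα]; exact pow_le_pow_left₀ hai0.le haiE 2
  have hlt : (1 : ℝ) < (2 * (n : ℝ) + 1) * (β * E ^ 2) := by
    have h := Finset.sum_lt_sum_of_nonempty (Finset.nonempty_range_iff.mpr (by omega)) hterm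
    rw [hsum, Finset.sum_const, Finset.card_range, nsmul_eq_mul] at h
    calc (1 : ℝ) < ((2 * n + 1 : ℕ) : ℝ) * (β * E ^ 2) := h
      _ = (2 * (n : ℝ) + 1) * (β * E ^ 2) := by push_cast; ring
  -- final numeric bound
  set P : ℝ := max (Real.log M) 0 + (sL + sL) - L / 2
      + (2 * (n : ℝ) + 1) * (2 + (sL + L / (20 * (n : ℝ)))) with hPdef
  have hEP : E ≤ Real.exp P := by
    have h1 : E ≤ D0 * (3 * (Real.exp sL * sB)) ^ (2 * n + 1) := by
      rw [hEdef]
      exact mul_le_mul_of_nonneg_left (pow_le_pow_left₀ hG0 hG3 _) hD0pos.le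
    have h2 : D0 ≤ Real.exp (max (Real.log M) 0 + (sL + sL) - L / 2) := by
      rw [hD0exp]
      apply Real.exp_le_exp.mpr
      have := le_max_left (Real.log M) 0
      linarith
    have h3 : (3 : ℝ) * (Real.exp sL * sB) ≤ Real.exp (2 + (sL + L / (20 * (n : ℝ)))) := by
      have h3a : (3 : ℝ) ≤ Real.exp 2 := by
        have := Real.add_one_le_exp (2 : ℝ)
        linarith
      calc (3 : ℝ) * (Real.exp sL * sB) ≤ Real.exp 2 * (Real.exp sL * sB) :=
            mul_le_mul_of_nonneg_right h3a (by positivity)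
        _ = Real.exp (2 + (sL + L / (20 * (n : ℝ)))) := by
            rw [hsBdef, ← Real.exp_add, ← Real.exp_add]
    have h4 : (3 * (Real.exp sL * sB)) ^ (2 * n + 1)
        ≤ Real.exp (((2 * n + 1 : ℕ) : ℝ) * (2 + (sL + L / (20 * (n : ℝ))))) := by
      rw [Real.exp_nat_mul]
      exact pow_le_pow_left₀ (by positivity) h3 _
    calc E ≤ D0 * (3 * (Real.exp sL * sB)) ^ (2 * n + 1) := h1
      _ ≤ Real.exp (max (Real.log M) 0 + (sL + sL) - L / 2)
          * Real.exp (((2 * n + 1 : ℕ) : ℝ) * (2 + (sL + L / (20 * (n : ℝ))))) :=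
          mul_le_mul h2 h4 (by positivity) (Real.exp_nonneg _)
      _ = Real.exp P := by
          rw [← Real.exp_add, hPdef]
          congr 1
          push_cast
          ring
  have hQ : 2 * (n : ℝ) + 1 + L / (10 * (n : ℝ)) + 2 * P < 0 := by
    have hb1 : (4 * (n : ℝ) + 6) * sL ≤ L / 10 := by
      linarith only [mul_le_mul_of_nonneg_right hsLbig hsL0, hsLsq]
    have hu : L / (10 * (n : ℝ)) = 2 * (L / (20 * (n : ℝ))) := by
      field_simp
      ring
    have huL : (20 * (n : ℝ)) * (L / (20 * (n : ℝ))) = L := by field_simp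
    have hupos : 0 ≤ L / (20 * (n : ℝ)) := by positivity
    have hb2 : L / (10 * (n : ℝ)) + (4 * (n : ℝ) + 2) * (L / (20 * (n : ℝ))) ≤ 3 * L / 10 := by
      rw [hu]
      linarith only [mul_nonneg (by linarith only [hn2] : (0 : ℝ) ≤ (n : ℝ) - 2) hupos, huL]
    have hPexp : 2 * P = 2 * max (Real.log M) 0 + 4 * sL - L + (8 * (n : ℝ) + 4)
        + (4 * (n : ℝ) + 2) * sL + (4 * (n : ℝ) + 2) * (L / (20 * (n : ℝ))) := by
      rw [hPdef]; ring
    linarith only [hPexp, hb1, hb2, hlogM, hL0, hu]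
  have hfin : (2 * (n : ℝ) + 1) * (β * E ^ 2) < 1 := by
    have h1 : 2 * (n : ℝ) + 1 ≤ Real.exp (2 * (n : ℝ) + 1) := by
      have := Real.add_one_le_exp (2 * (n : ℝ) + 1)
      linarith
    have h2 : E ^ 2 ≤ Real.exp P ^ 2 := pow_le_pow_left₀ hE0.le hEP 2
    calc (2 * (n : ℝ) + 1) * (β * E ^ 2)
        ≤ Real.exp (2 * (n : ℝ) + 1) * (Real.exp (L / (10 * (n : ℝ))) * Real.exp P ^ 2) := by
          rw [hβ]
          exact mul_le_mul h1 (mul_le_mul_of_nonneg_left h2 (Real.exp_nonneg _))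
            (by positivity) (Real.exp_nonneg _)
      _ = Real.exp (2 * (n : ℝ) + 1 + L / (10 * (n : ℝ)) + 2 * P) := by
          rw [sq, ← Real.exp_add, ← Real.exp_add, ← Real.exp_add]
          congr 1
          ring
      _ < 1 := Real.exp_lt_one_iff.mpr hQ
  exact absurd hlt (not_lt.mpr hfin.le)
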